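/- Let γ = ((i₁ j₁),…,(i_k j_k)) ∈ Σ*_n(k) and let l ∈ {1,…,k}. Then γ_l is obtained from γ_{l−1} by inserting j_l into the cycle of i_l immediately after i_l; precisely: γ_l(i_l) = j_l, γ_l(j_l) = γ_{l−1}(i_l), and γ_l(x) = γ_{l−1}(x) for every x ∉ {i_l, j_l}. -/

import Mathlib

/-- ℓ(σ): the number of cycles (orbits) of σ, including fixed points, counted via the
minimal representative of each orbit. -/
noncomputable def cycleCount {n : ℕ} (σ : Equiv.Perm (Fin n)) : ℕ :=
  Set.ncard {x : Fin n | ∀ y, σ.SameCycle x y → x ≤ y}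

/-- |σ| := n − ℓ(σ). -/
noncomputable def normPerm {n : ℕ} (σ : Equiv.Perm (Fin n)) : ℕ := n - cycleCount σ

/-- σ₁ ≼ σ₂ iff |σ₂| = |σ₁| + |σ₁⁻¹σ₂|. -/
def precLe {n : ℕ} (σ₁ σ₂ : Equiv.Perm (Fin n)) : Prop :=
  normPerm σ₂ = normPerm σ₁ + normPerm (σ₁⁻¹ * σ₂)

/-- Σ_n(k): tuples of k transpositions with |τ₁⋯τ_k| = k and τ₁⋯τ_k ≼ (1 … n). -/
def SigmaSet (n k : ℕ) : Set (Fin k → Equiv.Perm (Fin n)) :=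
  {τ | (∀ l, (τ l).IsSwap) ∧ normPerm (List.ofFn τ).prod = k ∧
      precLe (List.ofFn τ).prod (finRotate n)}

/-- γ_m := τ₁∘⋯∘τ_m, the product of the first m entries of the chain. -/
def gammaP {n k : ℕ} (τ : Fin k → Equiv.Perm (Fin n)) (m : ℕ) : Equiv.Perm (Fin n) :=
  ((List.ofFn τ).take m).prod

namespace Stmt12Aux

open Equiv Equiv.Perm

variable {n : ℕ}

/-- cyclic betweenness on ℕ: `y` is strictly between `x` and `w`, going upward cyclically. -/
def Btw (x w y : ℕ) : Prop := (x < y ∧ y < w) ∨ (w ≤ x ∧ (x < y ∨ y < w))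

lemma btw_def {x w y : ℕ} :
    Btw x w y ↔ ((x < y ∧ y < w) ∨ (w ≤ x ∧ (x < y ∨ y < w))) := Iff.rfl

section Basics

variable {σ : Equiv.Perm (Fin n)} {a b x y : Fin n}

lemma mul_swap_apply_left (σ : Equiv.Perm (Fin n)) (a b : Fin n) :
    (σ * Equiv.swap a b) a = σ b := by
  simp [Equiv.Perm.mul_apply]

lemma mul_swap_apply_right (σ : Equiv.Perm (Fin n)) (a b : Fin n) :
    (σ * Equiv.swap a b) b = σ a := by
  simp [Equiv.Perm.mul_apply]

lemma mul_swap_apply_other (σ : Equiv.Perm (Fin n)) {a b x : Fin n} (h1 : x ≠ a) (h2 : x ≠ b) :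
    (σ * Equiv.swap a b) x = σ x := by
  simp [Equiv.Perm.mul_apply, Equiv.swap_apply_of_ne_of_ne h1 h2]

lemma mul_swap_mul_swap (σ : Equiv.Perm (Fin n)) (a b : Fin n) :
    (σ * Equiv.swap a b) * Equiv.swap a b = σ := by
  rw [mul_assoc, Equiv.swap_mul_self, mul_one]

lemma sameCycle_closed {f : Equiv.Perm (Fin n)} {s : Set (Fin n)}
    (hc : ∀ z ∈ s, f z ∈ s) {x y : Fin n} (hx : x ∈ s) (h : f.SameCycle x y) : y ∈ s := by
  obtain ⟨i, hi, rfl⟩ := h.exists_pow_eq'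
  clear hi h
  induction i with
  | zero => simpa using hx
  | succ i ih =>
    rw [pow_succ', Equiv.Perm.mul_apply]
    exact hc _ ih

lemma sameCycle_mono {f g : Equiv.Perm (Fin n)} (h : ∀ z, g.SameCycle z (f z)) {x y : Fin n} :
    f.SameCycle x y → g.SameCycle x y := fun hxy =>
  sameCycle_closed (s := {w | g.SameCycle x w}) (fun z hz => hz.trans (h z))
    (Equiv.Perm.SameCycle.refl g x) hxy

lemma eq_of_sameCycle_fixed {f : Equiv.Perm (Fin n)} {x y : Fin n}
    (hfix : f x = x) (h : f.SameCycle x y) : y = x := by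
  obtain ⟨i, hi⟩ := h
  rw [Equiv.Perm.zpow_apply_eq_self_of_apply_eq_self hfix] at hi
  exact hi.symm

lemma apply_ne_of_sameCycle {f : Equiv.Perm (Fin n)} {x y : Fin n}
    (h : f.SameCycle x y) (hxy : y ≠ x) : f x ≠ x :=
  fun hfix => hxy (eq_of_sameCycle_fixed hfix h)

end Basics

section Counting

variable (σ : Equiv.Perm (Fin n))

/-- the set of minimal representatives of cycles -/
def minSet : Set (Fin n) := {x : Fin n | ∀ y, σ.SameCycle x y → x ≤ y}

lemma cycleCount_eq : cycleCount σ = (minSet σ).ncard := rfl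

/-- the minimal element of the cycle of `x` -/
noncomputable def cmin (x : Fin n) : Fin n :=
  (Finset.univ.filter (fun y => σ.SameCycle x y)).min'
    ⟨x, by simp [Equiv.Perm.SameCycle.refl]⟩

variable {σ}

lemma cmin_sameCycle (x : Fin n) : σ.SameCycle x (cmin σ x) := by
  have := Finset.min'_mem (Finset.univ.filter (fun y => σ.SameCycle x y))
    ⟨x, by simp [Equiv.Perm.SameCycle.refl]⟩
  simpa [cmin] using this

lemma cmin_le {x y : Fin n} (h : σ.SameCycle x y) : cmin σ x ≤ y := by
  apply Finset.min'_le
  simpa using h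

lemma cmin_mem_minSet (x : Fin n) : cmin σ x ∈ minSet σ := by
  intro y hy
  exact cmin_le ((cmin_sameCycle x).trans hy)

lemma eq_cmin_of_mem_minSet {x z : Fin n} (hx : x ∈ minSet σ) (h : σ.SameCycle z x) :
    x = cmin σ z := by
  refine le_antisymm (hx _ (h.symm.trans (cmin_sameCycle z))) (cmin_le h)

lemma minSet_nonempty (hn : 0 < n) : (minSet σ).Nonempty :=
  ⟨cmin σ ⟨0, hn⟩, cmin_mem_minSet _⟩

lemma cycleCount_le : cycleCount σ ≤ n := by
  rw [cycleCount_eq]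
  calc (minSet σ).ncard ≤ (Set.univ : Set (Fin n)).ncard :=
        Set.ncard_le_ncard (Set.subset_univ _) (Set.toFinite _)
    _ = n := by simp [Set.ncard_univ]

lemma one_le_cycleCount (hn : 0 < n) : 1 ≤ cycleCount σ := by
  rw [cycleCount_eq]
  have := (Set.ncard_pos (Set.toFinite _)).mpr (minSet_nonempty (σ := σ) hn)
  omega

lemma cycleCount_one : cycleCount (1 : Equiv.Perm (Fin n)) = n := by
  rw [cycleCount_eq]
  have : minSet (1 : Equiv.Perm (Fin n)) = Set.univ := by
    ext x
    simp only [minSet, Set.mem_setOf_eq, Set.mem_univ, iff_true]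
    intro y hy
    rw [Equiv.Perm.sameCycle_one] at hy
    exact hy.le
  rw [this]
  simp [Set.ncard_univ]

lemma eq_one_of_cycleCount_eq (h : cycleCount σ = n) : σ = 1 := by
  have huniv : minSet σ = Set.univ := by
    apply Set.eq_of_subset_of_ncard_le (Set.subset_univ _) _ (Set.toFinite _)
    have h1 : (Set.univ : Set (Fin n)).ncard = n := by
      simp [Set.ncard_univ]
    have h2 : (minSet σ).ncard = cycleCount σ := rfl
    omega
  apply Equiv.ext
  intro x
  have hx : x ∈ minSet σ := by rw [huniv]; trivial
  have hsx : σ x ∈ minSet σ := by rw [huniv]; trivial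
  have h1 : x ≤ σ x := hx _ ((Equiv.Perm.SameCycle.refl σ x).apply_right)
  have h2 : σ x ≤ x := hsx _ ((Equiv.Perm.SameCycle.refl σ x).apply_right).symm
  simpa using le_antisymm h2 h1

lemma normPerm_inv : normPerm σ⁻¹ = normPerm σ := by
  unfold normPerm cycleCount
  congr 2
  ext x
  simp only [Set.mem_setOf_eq]
  constructor <;> intro h y hy
  · exact h y (Equiv.Perm.sameCycle_inv.mpr hy)
  · exact h y (Equiv.Perm.sameCycle_inv.mp hy)

end Counting

section MergeSplit

variable {σ : Equiv.Perm (Fin n)} {a b x y : Fin n}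

lemma merge_link (hab : a ≠ b) (hnc : ¬ σ.SameCycle a b) :
    (σ * Equiv.swap a b).SameCycle a b := by
  classical
  have hex : ∃ t, 0 < t ∧ (σ ^ t) b = b :=
    ⟨orderOf σ, orderOf_pos σ, by rw [pow_orderOf_eq_one]; rfl⟩
  set p := Nat.find hex with hp
  obtain ⟨hppos, hpb⟩ := Nat.find_spec hex
  have key : ∀ t, 0 < t → t ≤ p → ((σ * Equiv.swap a b) ^ t) a = (σ ^ t) b := by
    intro t
    induction t with
    | zero => omega
    | succ t ih =>
      intro _ hle
      rcases Nat.eq_zero_or_pos t with h0 | hpos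
      · subst h0
        simp [mul_swap_apply_left]
      · have ht : t ≤ p := by omega
        have h1 := ih hpos ht
        have hz : (σ ^ t) b ≠ b := by
          intro h
          exact Nat.find_min hex (by omega : t < p) ⟨hpos, h⟩
        have hz2 : (σ ^ t) b ≠ a := by
          intro h
          exact hnc (Equiv.Perm.SameCycle.symm ⟨(t : ℤ), by rw [zpow_natCast, h]⟩)
        rw [pow_succ', Equiv.Perm.mul_apply, h1, Equiv.Perm.mul_apply,
          Equiv.swap_apply_of_ne_of_ne hz2 hz, ← Equiv.Perm.mul_apply, ← pow_succ']
  exact ⟨(p : ℤ), by rw [zpow_natCast, key p hppos le_rfl, hpb]⟩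

lemma sc_subset_merge (hab : a ≠ b) (hnc : ¬ σ.SameCycle a b) :
    σ.SameCycle x y → (σ * Equiv.swap a b).SameCycle x y := by
  set σ' := σ * Equiv.swap a b with hσ'
  have hlink : σ'.SameCycle a b := merge_link hab hnc
  apply sameCycle_mono
  intro z
  rcases eq_or_ne z a with rfl | hza
  · exact hlink.trans (by rw [← mul_swap_apply_right σ z b]; exact (Equiv.Perm.SameCycle.refl σ' b).apply_right)
  rcases eq_or_ne z b with rfl | hzb
  · exact hlink.symm.trans (by rw [← mul_swap_apply_left σ a z]; exact (Equiv.Perm.SameCycle.refl σ' a).apply_right)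
  · rw [← mul_swap_apply_other σ hza hzb]
    exact (Equiv.Perm.SameCycle.refl σ' z).apply_right

lemma merge_iff (hab : a ≠ b) (hnc : ¬ σ.SameCycle a b) :
    (σ * Equiv.swap a b).SameCycle x y ↔
      (σ.SameCycle x y ∨
        ((σ.SameCycle a x ∨ σ.SameCycle b x) ∧ (σ.SameCycle a y ∨ σ.SameCycle b y))) := by
  constructor
  · intro h
    refine sameCycle_closed (s := {w | σ.SameCycle x w ∨
      ((σ.SameCycle a x ∨ σ.SameCycle b x) ∧ (σ.SameCycle a w ∨ σ.SameCycle b w))})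
      ?_ (Or.inl (Equiv.Perm.SameCycle.refl σ x)) h
    intro z hz
    rcases eq_or_ne z a with hza | hza
    · rw [hza] at hz ⊢
      rw [mul_swap_apply_left]
      have hFx : σ.SameCycle a x ∨ σ.SameCycle b x := by
        rcases hz with hz | ⟨h1, _⟩
        · exact Or.inl hz.symm
        · exact h1
      exact Or.inr ⟨hFx, Or.inr ((Equiv.Perm.SameCycle.refl σ b).apply_right)⟩
    rcases eq_or_ne z b with hzb | hzb
    · rw [hzb] at hz ⊢
      rw [mul_swap_apply_right]
      have hFx : σ.SameCycle a x ∨ σ.SameCycle b x := by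
        rcases hz with hz | ⟨h1, _⟩
        · exact Or.inr hz.symm
        · exact h1
      exact Or.inr ⟨hFx, Or.inl ((Equiv.Perm.SameCycle.refl σ a).apply_right)⟩
    · rw [mul_swap_apply_other σ hza hzb]
      rcases hz with hz | ⟨h1, h2⟩
      · exact Or.inl hz.apply_right
      · refine Or.inr ⟨h1, ?_⟩
        rcases h2 with h2 | h2
        · exact Or.inl h2.apply_right
        · exact Or.inr h2.apply_right
  · intro h
    have hlink : (σ * Equiv.swap a b).SameCycle a b := merge_link hab hnc
    rcases h with h | ⟨h1, h2⟩
    · exact sc_subset_merge hab hnc h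
    · have lx : (σ * Equiv.swap a b).SameCycle a x := by
        rcases h1 with h1 | h1
        · exact sc_subset_merge hab hnc h1
        · exact hlink.trans (sc_subset_merge hab hnc h1)
      have ly : (σ * Equiv.swap a b).SameCycle a y := by
        rcases h2 with h2 | h2
        · exact sc_subset_merge hab hnc h2
        · exact hlink.trans (sc_subset_merge hab hnc h2)
      exact lx.symm.trans ly

lemma minSet_merge_aux (hab : a ≠ b) (hnc : ¬ σ.SameCycle a b)
    (hord : cmin σ b < cmin σ a) :
    minSet (σ * Equiv.swap a b) = minSet σ \ {cmin σ a} := by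
  set w := cmin σ a with hw
  set m := cmin σ b with hm
  have hscwm : (σ * Equiv.swap a b).SameCycle w m := by
    rw [merge_iff hab hnc]
    exact Or.inr ⟨Or.inl (cmin_sameCycle a), Or.inr (cmin_sameCycle b)⟩
  ext x
  simp only [Set.mem_diff, Set.mem_singleton_iff]
  constructor
  · intro hx
    refine ⟨fun y hy => hx y (sc_subset_merge hab hnc hy), ?_⟩
    intro hxw
    rw [hxw] at hx
    exact absurd (hx _ hscwm) (not_le.mpr hord)
  · rintro ⟨hx, hxw⟩
    intro y hy
    rw [merge_iff hab hnc] at hy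
    rcases hy with hy | ⟨h1, h2⟩
    · exact hx y hy
    · have hxm : x = m := by
        rcases h1 with h1 | h1
        · exact absurd (eq_cmin_of_mem_minSet hx h1) hxw
        · exact eq_cmin_of_mem_minSet hx h1
      rcases h2 with h2 | h2
      · calc x = m := hxm
          _ ≤ w := hord.le
          _ ≤ y := cmin_le h2
      · calc x = m := hxm
          _ ≤ y := cmin_le h2

lemma cycleCount_merge (hab : a ≠ b) (hnc : ¬ σ.SameCycle a b) :
    cycleCount (σ * Equiv.swap a b) + 1 = cycleCount σ := by
  have hαβ : cmin σ a ≠ cmin σ b := by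
    intro h
    apply hnc
    have h1 := cmin_sameCycle (σ := σ) a
    have h2 := cmin_sameCycle (σ := σ) b
    rw [h] at h1
    exact h1.trans h2.symm
  have key : ∀ (u v : Fin n), u ≠ v → ¬ σ.SameCycle u v → cmin σ v < cmin σ u →
      cycleCount (σ * Equiv.swap u v) + 1 = cycleCount σ := by
    intro u v huv hnc' hord
    have hset := minSet_merge_aux huv hnc' hord
    have hwmem : cmin σ u ∈ minSet σ := cmin_mem_minSet u
    rw [cycleCount_eq, cycleCount_eq, hset]
    exact Set.ncard_diff_singleton_add_one hwmem (Set.toFinite _)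
  rcases lt_or_gt_of_ne hαβ with hlt | hlt
  · rw [Equiv.swap_comm]
    exact key b a hab.symm (fun h => hnc h.symm) hlt
  · exact key a b hab hnc hlt

lemma split_not_sameCycle (hsc : σ.SameCycle a b) (hab : a ≠ b) :
    ¬ (σ * Equiv.swap a b).SameCycle a b := by
  classical
  have hex : ∃ t, 0 < t ∧ (σ ^ t) a = b := by
    obtain ⟨i, _, hi⟩ := hsc.exists_pow_eq'
    refine ⟨i, ?_, hi⟩
    rcases Nat.eq_zero_or_pos i with h0 | h
    · subst h0; simp at hi; exact absurd hi hab
    · exact h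
  obtain ⟨hqpos, hqb⟩ := Nat.find_spec hex
  set q := Nat.find hex with hq
  have haW : ∀ t, 0 < t → t ≤ q → (σ ^ t) a ≠ a := by
    intro t ht0 htq hta
    rcases eq_or_lt_of_le htq with h | hlt
    · rw [h] at hta
      exact hab (hta.symm.trans hqb)
    · apply Nat.find_min hex (show q - t < q by omega)
      refine ⟨by omega, ?_⟩
      have hqt : q - t + t = q := by omega
      have : (σ ^ (q - t)) ((σ ^ t) a) = (σ ^ q) a := by
        rw [← Equiv.Perm.mul_apply, ← pow_add, hqt]
      rw [hta] at this
      rw [this, hqb]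
  set W : Set (Fin n) := {z | ∃ t, 0 < t ∧ t ≤ q ∧ (σ ^ t) a = z} with hW
  have haW' : a ∉ W := by
    rintro ⟨t, ht0, htq, hta⟩
    exact haW t ht0 htq hta
  have hbW : b ∈ W := ⟨q, hqpos, le_rfl, hqb⟩
  have hclosed : ∀ z ∈ W, (σ * Equiv.swap a b) z ∈ W := by
    rintro z ⟨t, ht0, htq, rfl⟩
    rcases eq_or_lt_of_le htq with h | hlt
    · rw [h, hqb, mul_swap_apply_right]
      exact ⟨1, one_pos, hqpos, by rw [pow_one]⟩
    · have hzb : (σ ^ t) a ≠ b := fun h => Nat.find_min hex hlt ⟨ht0, h⟩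
      have hza : (σ ^ t) a ≠ a := haW t ht0 htq
      rw [mul_swap_apply_other σ hza hzb]
      refine ⟨t + 1, by omega, by omega, ?_⟩
      rw [pow_succ', Equiv.Perm.mul_apply]
  intro hcon
  exact haW' (sameCycle_closed hclosed hbW hcon.symm)

lemma sc_subset_split (hsc : σ.SameCycle a b) :
    (σ * Equiv.swap a b).SameCycle x y → σ.SameCycle x y := by
  apply sameCycle_mono
  intro z
  rcases eq_or_ne z a with rfl | hza
  · rw [mul_swap_apply_left]
    exact hsc.trans ((Equiv.Perm.SameCycle.refl σ b).apply_right)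
  rcases eq_or_ne z b with rfl | hzb
  · rw [mul_swap_apply_right]
    exact hsc.symm.trans ((Equiv.Perm.SameCycle.refl σ a).apply_right)
  · rw [mul_swap_apply_other σ hza hzb]
    exact (Equiv.Perm.SameCycle.refl σ z).apply_right

lemma cycleCount_split (hsc : σ.SameCycle a b) (hab : a ≠ b) :
    cycleCount (σ * Equiv.swap a b) = cycleCount σ + 1 := by
  have h1 : ¬ (σ * Equiv.swap a b).SameCycle a b := split_not_sameCycle hsc hab
  have := cycleCount_merge hab h1
  rw [mul_swap_mul_swap] at this
  omega

lemma normPerm_merge (hab : a ≠ b) (hnc : ¬ σ.SameCycle a b) :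
    normPerm (σ * Equiv.swap a b) = normPerm σ + 1 := by
  have h1 := cycleCount_merge hab hnc
  have h2 : cycleCount σ ≤ n := cycleCount_le
  unfold normPerm
  omega

lemma normPerm_split (hsc : σ.SameCycle a b) (hab : a ≠ b) :
    normPerm (σ * Equiv.swap a b) + 1 = normPerm σ ∧ 1 ≤ normPerm σ := by
  have h1 := cycleCount_split hsc hab
  have h2 : cycleCount (σ * Equiv.swap a b) ≤ n := cycleCount_le
  unfold normPerm
  omega

lemma normPerm_mul_swap_le (hab : a ≠ b) :
    normPerm (σ * Equiv.swap a b) ≤ normPerm σ + 1 := by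
  by_cases h : σ.SameCycle a b
  · have := normPerm_split h hab; omega
  · rw [normPerm_merge hab h]

lemma normPerm_le_mul_swap (hab : a ≠ b) :
    normPerm σ ≤ normPerm (σ * Equiv.swap a b) + 1 := by
  by_cases h : σ.SameCycle a b
  · have := normPerm_split h hab; omega
  · rw [normPerm_merge hab h]; omega

end MergeSplit

section Subadd

variable {σ τ : Equiv.Perm (Fin n)} {a b x y : Fin n}

lemma normPerm_one : normPerm (1 : Equiv.Perm (Fin n)) = 0 := by
  unfold normPerm
  rw [cycleCount_one]
  omega

lemma eq_one_of_normPerm_zero (h : normPerm σ = 0) : σ = 1 := by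
  have h1 : cycleCount σ ≤ n := cycleCount_le
  unfold normPerm at h
  exact eq_one_of_cycleCount_eq (by omega)

lemma exists_moved_of_ne_one (h : σ ≠ 1) : ∃ x, σ x ≠ x := by
  by_contra hcon
  push_neg at hcon
  exact h (Equiv.ext fun x => (hcon x).trans (Equiv.Perm.one_apply x).symm)

lemma normPerm_swap_mul_le (hab : a ≠ b) :
    normPerm (Equiv.swap a b * σ) ≤ normPerm σ + 1 := by
  have h1 : (Equiv.swap a b * σ)⁻¹ = σ⁻¹ * Equiv.swap a b := by
    rw [mul_inv_rev, Equiv.swap_inv]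
  have := normPerm_mul_swap_le (σ := σ⁻¹) hab
  rw [← normPerm_inv (σ := Equiv.swap a b * σ), h1, ← normPerm_inv (σ := σ)] at *
  exact this

lemma normPerm_swap_mul_split (hsc : σ.SameCycle a b) (hab : a ≠ b) :
    normPerm (Equiv.swap a b * σ) + 1 = normPerm σ ∧ 1 ≤ normPerm σ := by
  have h1 : (Equiv.swap a b * σ)⁻¹ = σ⁻¹ * Equiv.swap a b := by
    rw [mul_inv_rev, Equiv.swap_inv]
  have hsc' : σ⁻¹.SameCycle a b := Equiv.Perm.sameCycle_inv.mpr hsc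
  have := normPerm_split hsc' hab
  rw [← normPerm_inv (σ := Equiv.swap a b * σ), h1, ← normPerm_inv (σ := σ)]
  exact this

lemma normPerm_mul_le_aux : ∀ (d : ℕ) (σ τ : Equiv.Perm (Fin n)), normPerm τ = d →
    normPerm (σ * τ) ≤ normPerm σ + d := by
  intro d
  induction d using Nat.strong_induction_on with
  | _ d ih =>
    intro σ τ hd
    rcases Nat.eq_zero_or_pos d with h0 | hpos
    · subst h0
      rw [eq_one_of_normPerm_zero hd, mul_one]
      omega
    · have hτ1 : τ ≠ 1 := fun h => by rw [h, normPerm_one] at hd; omega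
      obtain ⟨x, hx⟩ := exists_moved_of_ne_one hτ1
      have hsc : τ.SameCycle x (τ x) := (Equiv.Perm.SameCycle.refl τ x).apply_right
      have hxne : x ≠ τ x := Ne.symm hx
      obtain ⟨hsplit, _⟩ := normPerm_split hsc hxne
      have hback : (τ * Equiv.swap x (τ x)) * Equiv.swap x (τ x) = τ :=
        mul_swap_mul_swap τ x (τ x)
      have h1 : σ * τ = (σ * (τ * Equiv.swap x (τ x))) * Equiv.swap x (τ x) := by
        rw [mul_assoc, hback]
      have h2 : normPerm (τ * Equiv.swap x (τ x)) = d - 1 := by omega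
      calc normPerm (σ * τ)
          ≤ normPerm (σ * (τ * Equiv.swap x (τ x))) + 1 := by
            rw [h1]; exact normPerm_mul_swap_le hxne
        _ ≤ (normPerm σ + (d - 1)) + 1 := by
            have := ih (d - 1) (by omega) σ (τ * Equiv.swap x (τ x)) h2
            omega
        _ ≤ normPerm σ + d := by omega

lemma normPerm_mul_le (σ τ : Equiv.Perm (Fin n)) :
    normPerm (σ * τ) ≤ normPerm σ + normPerm τ :=
  normPerm_mul_le_aux (normPerm τ) σ τ rfl

end Subadd

section Rotate

lemma sameCycle_finRotate {m : ℕ} (x y : Fin (m + 2)) :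
    (finRotate (m + 2)).SameCycle x y := by
  have hs : ∀ z : Fin (m + 2), finRotate (m + 2) z ≠ z := by
    intro z
    rw [← Equiv.Perm.mem_support, support_finRotate]
    exact Finset.mem_univ z
  exact isCycle_finRotate.sameCycle (hs x) (hs y)

lemma cycleCount_finRotate (hn : 1 ≤ n) : cycleCount (finRotate n) = 1 := by
  match n, hn with
  | 1, _ => rw [finRotate_one]; exact cycleCount_one
  | (m + 2), _ =>
    rw [cycleCount_eq]
    have : minSet (finRotate (m + 2)) = {(0 : Fin (m + 2))} := by
      ext x
      simp only [minSet, Set.mem_setOf_eq, Set.mem_singleton_iff]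
      constructor
      · intro h
        exact le_antisymm (h 0 (sameCycle_finRotate x 0)) (Fin.zero_le x)
      · rintro rfl y _
        exact Fin.zero_le y
    rw [this, Set.ncard_singleton]

lemma normPerm_finRotate (hn : 1 ≤ n) : normPerm (finRotate n) = n - 1 := by
  unfold normPerm
  rw [cycleCount_finRotate hn]

end Rotate

section Inc

/-- increasing-cycles property: each cycle of ρ, read along ρ, visits its support
in increasing cyclic order. -/
def IncP (ρ : Equiv.Perm (Fin n)) : Prop :=
  ∀ x y : Fin n, ρ.SameCycle x y → y ≠ x → y ≠ ρ x → ¬ Btw x.val (ρ x).val y.val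

lemma incP_finRotate : IncP (finRotate n) := by
  cases n with
  | zero => intro x; exact x.elim0
  | succ m =>
    intro x y hsc hyx hyρ hbtw
    have hyval : y.val ≠ x.val := fun h => hyx (Fin.val_injective h)
    rw [finRotate_succ_apply] at hbtw
    rw [Fin.val_add_one] at hbtw
    have hxlt := x.isLt
    have hylt := y.isLt
    by_cases hlast : x = Fin.last m
    · rw [if_pos hlast] at hbtw
      have : x.val = m := by rw [hlast]; rfl
      rcases hbtw with ⟨h1, h2⟩ | ⟨_, h2 | h2⟩ <;> omega
    · rw [if_neg hlast] at hbtw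
      rcases hbtw with ⟨h1, h2⟩ | ⟨h1, _⟩ <;> omega

lemma incP_of_split {ρ : Equiv.Perm (Fin n)} {a b : Fin n} (hP : IncP ρ)
    (hsc : ρ.SameCycle a b) (hab : a ≠ b) : IncP (ρ * Equiv.swap a b) := by
  have habv : a.val ≠ b.val := fun h => hab (Fin.val_injective h)
  have hma : ρ a ≠ a := apply_ne_of_sameCycle hsc hab.symm
  have hmb : ρ b ≠ b := apply_ne_of_sameCycle hsc.symm hab
  have hsub : ∀ {x y : Fin n}, (ρ * Equiv.swap a b).SameCycle x y → ρ.SameCycle x y :=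
    fun h => sc_subset_split hsc h
  -- a is not in the half-open cyclic interval (a, b]
  have nbaa : ¬ Btw a.val b.val a.val := by simp only [Btw]; omega
  -- ρ a lies in the cyclic interval (a, b]
  have hra : Btw a.val b.val (ρ a).val ∨ ρ a = b := by
    by_cases h : ρ a = b
    · exact Or.inr h
    · left
      have hnb : ¬ Btw a.val (ρ a).val b.val :=
        hP a b hsc hab.symm (fun hh => h hh.symm)
      have h1 : (ρ a).val ≠ a.val := fun hh => hma (Fin.val_injective hh)
      have h2 : (ρ a).val ≠ b.val := fun hh => h (Fin.val_injective hh)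
      simp only [Btw] at hnb ⊢
      omega
  -- ρ b lies outside (a, b] (or equals a)
  have hrb : ρ b = a ∨ (¬ Btw a.val b.val (ρ b).val ∧ ρ b ≠ b) := by
    by_cases h : ρ b = a
    · exact Or.inl h
    · right
      refine ⟨?_, hmb⟩
      intro hcon
      have hnba : ¬ Btw b.val (ρ b).val a.val :=
        hP b a hsc.symm hab (fun hh => h hh.symm)
      have h1 : (ρ b).val ≠ a.val := fun hh => h (Fin.val_injective hh)
      have h2 : (ρ b).val ≠ b.val := fun hh => hmb (Fin.val_injective hh)
      simp only [Btw] at hnba hcon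
      omega
  -- the forward orbit of b under ρ * swap a b stays inside (a, b]
  have hA : ∀ y, (ρ * Equiv.swap a b).SameCycle b y →
      ρ.SameCycle b y ∧ (Btw a.val b.val y.val ∨ y = b) := by
    intro y hy
    refine sameCycle_closed
      (s := {w | ρ.SameCycle b w ∧ (Btw a.val b.val w.val ∨ w = b)}) ?_
      ⟨Equiv.Perm.SameCycle.refl ρ b, Or.inr rfl⟩ hy
    rintro z ⟨hz1, hz2⟩
    rcases eq_or_ne z b with hzb | hzb
    · rw [hzb, mul_swap_apply_right]
      refine ⟨hsc.symm.trans ((Equiv.Perm.SameCycle.refl ρ a).apply_right), ?_⟩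
      rcases hra with h | h
      · exact Or.inl h
      · exact Or.inr h
    rcases eq_or_ne z a with hza | hza
    · exfalso
      rcases hz2 with h | h
      · rw [hza] at h; exact nbaa h
      · exact hzb h
    · rw [mul_swap_apply_other ρ hza hzb]
      have hz2' : Btw a.val b.val z.val := by
        rcases hz2 with h | h
        · exact h
        · exact absurd h hzb
      refine ⟨hz1.trans ((Equiv.Perm.SameCycle.refl ρ z).apply_right), ?_⟩
      by_cases h1 : ρ z = b
      · exact Or.inr h1
      · left
        by_contra h2
        have hmz : ρ z ≠ z := apply_ne_of_sameCycle hz1.symm hzb.symm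
        have hnzb : ¬ Btw z.val (ρ z).val b.val :=
          hP z b hz1.symm hzb.symm (fun hh => h1 hh.symm)
        have d1 : (ρ z).val ≠ b.val := fun hh => h1 (Fin.val_injective hh)
        have d2 : (ρ z).val ≠ z.val := fun hh => hmz (Fin.val_injective hh)
        simp only [Btw] at hz2' h2 hnzb
        omega
  -- the forward orbit of a under ρ * swap a b stays outside (a, b]
  have hB : ∀ y, (ρ * Equiv.swap a b).SameCycle a y →
      ρ.SameCycle a y ∧ (¬ Btw a.val b.val y.val ∧ y ≠ b) := by
    intro y hy
    refine sameCycle_closed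
      (s := {w | ρ.SameCycle a w ∧ (¬ Btw a.val b.val w.val ∧ w ≠ b)}) ?_
      ⟨Equiv.Perm.SameCycle.refl ρ a, nbaa, hab⟩ hy
    rintro z ⟨hz1, hz2, hz3⟩
    rcases eq_or_ne z a with hza | hza
    · rw [hza, mul_swap_apply_left]
      refine ⟨hsc.trans ((Equiv.Perm.SameCycle.refl ρ b).apply_right), ?_⟩
      rcases hrb with h | ⟨h1, h2⟩
      · rw [h]
        exact ⟨nbaa, hab⟩
      · exact ⟨h1, h2⟩
    · rw [mul_swap_apply_other ρ hza hz3]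
      refine ⟨hz1.trans ((Equiv.Perm.SameCycle.refl ρ z).apply_right), ?_⟩
      have hmz : ρ z ≠ z :=
        apply_ne_of_sameCycle (hz1.symm.trans hsc) hz3.symm
      have dz1 : z.val ≠ a.val := fun hh => hza (Fin.val_injective hh)
      have dz2 : z.val ≠ b.val := fun hh => hz3 (Fin.val_injective hh)
      by_cases hzb' : ρ z = b
      · -- impossible: the next element after z would have to pass a first
        exfalso
        have hnza : ¬ Btw z.val (ρ z).val a.val :=
          hP z a hz1.symm hza.symm (fun hh => hab (hh.trans hzb'))
        rw [hzb'] at hnza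
        simp only [Btw] at hz2 hnza
        omega
      by_cases hza' : ρ z = a
      · rw [hza']
        exact ⟨nbaa, hab⟩
      · constructor
        · intro hcon
          have hnza : ¬ Btw z.val (ρ z).val a.val :=
            hP z a hz1.symm hza.symm (fun hh => hza' hh.symm)
          have d1 : (ρ z).val ≠ a.val := fun hh => hza' (Fin.val_injective hh)
          have d2 : (ρ z).val ≠ z.val := fun hh => hmz (Fin.val_injective hh)
          simp only [Btw] at hz2 hcon hnza
          omega
        · exact hzb'
  -- now prove the increasing property for ρ * swap a b
  intro x y hxy hyx hyρ hbtw
  rcases eq_or_ne x a with hxa | hxa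
  · -- x = a ; (ρ * swap a b) a = ρ b
    rw [hxa] at hxy hyx hyρ hbtw
    rw [mul_swap_apply_left] at hyρ hbtw
    rcases eq_or_ne (ρ b) a with hfix | hfix
    · -- a is a fixed point of ρ * swap a b
      have : y = a := eq_of_sameCycle_fixed (by rw [mul_swap_apply_left, hfix]) hxy
      exact hyx this
    · obtain ⟨hay, hyn, hynb⟩ := hB y hxy
      have hnby : ¬ Btw b.val (ρ b).val y.val :=
        hP b y (hsc.symm.trans hay) hynb hyρ
      obtain hrb' | ⟨hrb1, _⟩ := hrb
      · exact hfix hrb'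
      · have d1 : y.val ≠ a.val := fun hh => hyx (Fin.val_injective hh)
        have d2 : y.val ≠ b.val := fun hh => hynb (Fin.val_injective hh)
        have d3 : (ρ b).val ≠ a.val := fun hh => hfix (Fin.val_injective hh)
        have d4 : (ρ b).val ≠ b.val := fun hh => hmb (Fin.val_injective hh)
        have d5 : y.val ≠ (ρ b).val := fun hh => hyρ (Fin.val_injective hh)
        simp only [Btw] at hyn hnby hrb1 hbtw
        omega
  rcases eq_or_ne x b with hxb | hxb
  · -- x = b ; (ρ * swap a b) b = ρ a
    rw [hxb] at hxy hyx hyρ hbtw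
    rw [mul_swap_apply_right] at hyρ hbtw
    rcases eq_or_ne (ρ a) b with hfix | hfix
    · have : y = b := eq_of_sameCycle_fixed (by rw [mul_swap_apply_right, hfix]) hxy
      exact hyx this
    · obtain ⟨hby, hyin⟩ := hA y hxy
      have hyinb : Btw a.val b.val y.val := by
        rcases hyin with h | h
        · exact h
        · exact absurd h hyx
      have hya : y ≠ a := by
        intro hh
        rw [hh] at hyinb
        exact nbaa hyinb
      have hnay : ¬ Btw a.val (ρ a).val y.val :=
        hP a y (hsc.trans hby) hya hyρ
      have hra' : Btw a.val b.val (ρ a).val := by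
        rcases hra with h | h
        · exact h
        · exact absurd h hfix
      have d1 : y.val ≠ b.val := fun hh => hyx (Fin.val_injective hh)
      have d2 : y.val ≠ (ρ a).val := fun hh => hyρ (Fin.val_injective hh)
      have d3 : (ρ a).val ≠ a.val := fun hh => hma (Fin.val_injective hh)
      have d4 : (ρ a).val ≠ b.val := fun hh => hfix (Fin.val_injective hh)
      simp only [Btw] at hyinb hnay hra' hbtw
      omega
  · -- x ∉ {a, b}
    rw [mul_swap_apply_other ρ hxa hxb] at hyρ hbtw
    exact hP x y (hsub hxy) hyx hyρ hbtw

lemma incP_of_precLe (hn : 2 ≤ n) {σ : Equiv.Perm (Fin n)}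
    (h : precLe σ (finRotate n)) : IncP σ := by
  set c := finRotate n with hc
  have hnormc : normPerm c = n - 1 := normPerm_finRotate (by omega)
  suffices key : ∀ (d : ℕ) (σ : Equiv.Perm (Fin n)), precLe σ c →
      normPerm (σ⁻¹ * c) = d → IncP σ from key _ σ h rfl
  intro d
  induction d with
  | zero =>
    intro σ hpre h0
    have : σ = c := by
      have h1 : σ⁻¹ * c = 1 := eq_one_of_normPerm_zero h0
      rwa [inv_mul_eq_one] at h1
    rw [this]
    exact incP_finRotate
  | succ d ih =>
    intro σ hpre hd
    have hπ1 : σ⁻¹ * c ≠ 1 := fun hcon => by rw [hcon, normPerm_one] at hd; omega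
    obtain ⟨x, hx⟩ := exists_moved_of_ne_one hπ1
    set π := σ⁻¹ * c with hπ
    set t := Equiv.swap x (π x) with ht
    have hxne : x ≠ π x := Ne.symm hx
    have hscπ : π.SameCycle x (π x) := (Equiv.Perm.SameCycle.refl π x).apply_right
    obtain ⟨hsplitπ, _⟩ := normPerm_swap_mul_split hscπ hxne
    rw [← ht] at hsplitπ
    set σ₂ := σ * t with hσ₂
    have hinv2 : σ₂⁻¹ * c = t * π := by
      rw [hσ₂, mul_inv_rev, ht, Equiv.swap_inv, mul_assoc, ← hπ, ← ht]
    have hd2 : normPerm (σ₂⁻¹ * c) = d := by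
      rw [hinv2]; omega
    have hup : normPerm σ₂ ≤ normPerm σ + 1 := normPerm_mul_swap_le hxne
    have hlow : normPerm c ≤ normPerm σ₂ + normPerm (σ₂⁻¹ * c) := by
      have hform : σ₂ * (σ₂⁻¹ * c) = c := by rw [mul_inv_cancel_left]
      calc normPerm c = normPerm (σ₂ * (σ₂⁻¹ * c)) := by rw [hform]
        _ ≤ normPerm σ₂ + normPerm (σ₂⁻¹ * c) := normPerm_mul_le _ _
    have hpre' : normPerm c = normPerm σ + (d + 1) := by
      rw [hpre, hd]
    have hnσ₂ : normPerm σ₂ = normPerm σ + 1 := by omega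
    have hpre₂ : precLe σ₂ c := by
      unfold precLe
      omega
    have hIncP₂ : IncP σ₂ := ih σ₂ hpre₂ hd2
    have hsc₂ : σ₂.SameCycle x (π x) := by
      by_contra hcon
      have hmerge := normPerm_merge hxne hcon
      rw [← ht] at hmerge
      have hback : σ₂ * t = σ := by
        rw [hσ₂, ht]; exact mul_swap_mul_swap σ x (π x)
      rw [hback] at hmerge
      omega
    have hfinal : σ₂ * t = σ := by
      rw [hσ₂, ht]; exact mul_swap_mul_swap σ x (π x)
    rw [← hfinal, ht]
    exact incP_of_split hIncP₂ hsc₂ hxne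

end Inc

section Chain

variable {k : ℕ}

lemma gammaP_zero (τ : Fin k → Equiv.Perm (Fin n)) : gammaP τ 0 = 1 := by
  simp [gammaP]

lemma gammaP_succ (τ : Fin k → Equiv.Perm (Fin n)) {m : ℕ} (hm : m < k) :
    gammaP τ (m + 1) = gammaP τ m * τ ⟨m, hm⟩ := by
  unfold gammaP
  have hlen : m < (List.ofFn τ).length := by simpa using hm
  rw [List.take_succ, List.getElem?_eq_getElem hlen]
  rw [List.prod_append, List.getElem_ofFn]
  simp

lemma gammaP_stall (τ : Fin k → Equiv.Perm (Fin n)) {m : ℕ} (hm : k ≤ m) :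
    gammaP τ m = (List.ofFn τ).prod := by
  unfold gammaP
  rw [List.take_of_length_le (by simpa using hm)]

variable {τ : Fin k → Equiv.Perm (Fin n)}

lemma chain_le (hswap : ∀ l, (τ l).IsSwap) : ∀ m, normPerm (gammaP τ m) ≤ m := by
  intro m
  induction m with
  | zero => rw [gammaP_zero, normPerm_one]
  | succ m ih =>
    by_cases hm : m < k
    · obtain ⟨a, b, hab, hg⟩ := hswap ⟨m, hm⟩
      rw [gammaP_succ τ hm, hg]
      have := normPerm_mul_swap_le (σ := gammaP τ m) hab
      omega
    · rw [gammaP_stall τ (by omega), ← gammaP_stall τ (show k ≤ m by omega)]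
      omega

lemma chain_diff (hswap : ∀ l, (τ l).IsSwap) :
    ∀ (d m : ℕ), normPerm (gammaP τ (m + d)) ≤ normPerm (gammaP τ m) + d := by
  intro d
  induction d with
  | zero => intro m; simp
  | succ d ih =>
    intro m
    have h1 := ih m
    by_cases hm : m + d < k
    · obtain ⟨a, b, hab, hg⟩ := hswap ⟨m + d, hm⟩
      rw [show m + (d+1) = (m + d) + 1 by omega, gammaP_succ τ hm, hg]
      have := normPerm_mul_swap_le (σ := gammaP τ (m + d)) hab
      omega
    · rw [show m + (d+1) = (m + d) + 1 by omega,
        gammaP_stall τ (show k ≤ m + d + 1 by omega),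
        ← gammaP_stall τ (show k ≤ m + d by omega)]
      omega

lemma chain_norm_eq (hswap : ∀ l, (τ l).IsSwap) (hk : normPerm (gammaP τ k) = k)
    {m : ℕ} (hm : m ≤ k) : normPerm (gammaP τ m) = m := by
  have h1 := chain_le hswap m
  have h2 := chain_diff hswap (k - m) m
  rw [show m + (k - m) = k by omega, hk] at h2
  omega

lemma normPerm_prod_le (L : List (Equiv.Perm (Fin n))) (h : ∀ g ∈ L, g.IsSwap) :
    normPerm L.prod ≤ L.length := by
  induction L with
  | nil => simp [normPerm_one]
  | cons g t ih =>
    obtain ⟨a, b, hab, hg⟩ := h g (List.mem_cons_self)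
    rw [List.prod_cons, hg]
    have h1 := normPerm_swap_mul_le (σ := t.prod) hab
    have h2 := ih (fun g' hg' => h g' (List.mem_cons_of_mem _ hg'))
    simp only [List.length_cons]
    omega

lemma chain_prec (hswap : ∀ l, (τ l).IsSwap) (hk : normPerm (gammaP τ k) = k)
    (hpre : precLe ((List.ofFn τ).prod) (finRotate n)) (hn : 2 ≤ n)
    {m : ℕ} (hm : m ≤ k) : precLe (gammaP τ m) (finRotate n) := by
  set c := finRotate n with hc
  set P := (List.ofFn τ).prod with hP
  have hnormc : normPerm c = n - 1 := normPerm_finRotate (by omega)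
  have hPk : normPerm P = k := by
    rw [hP, ← gammaP_stall τ le_rfl]
    exact chain_norm_eq hswap hk le_rfl
  have he : normPerm c = k + normPerm (P⁻¹ * c) := by
    rw [hpre, hPk]
  have hsplit : (gammaP τ m)⁻¹ * P = ((List.ofFn τ).drop m).prod := by
    have h0 := List.prod_take_mul_prod_drop (List.ofFn τ) m
    have : (gammaP τ m) * ((List.ofFn τ).drop m).prod = P := h0
    rw [← this, inv_mul_cancel_left]
  have hD : normPerm (((List.ofFn τ).drop m).prod) ≤ k - m := by
    have h1 := normPerm_prod_le ((List.ofFn τ).drop m) (fun g hg => by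
      obtain ⟨l', hl'⟩ := List.mem_ofFn.mp (List.drop_subset _ _ hg)
      exact hl' ▸ hswap l')
    simpa using h1
  have htri1 : normPerm ((gammaP τ m)⁻¹ * c) ≤ (k - m) + normPerm (P⁻¹ * c) := by
    have hform : ((gammaP τ m)⁻¹ * P) * (P⁻¹ * c) = (gammaP τ m)⁻¹ * c := by
      rw [mul_assoc, mul_inv_cancel_left]
    calc normPerm ((gammaP τ m)⁻¹ * c)
        = normPerm (((gammaP τ m)⁻¹ * P) * (P⁻¹ * c)) := by rw [hform]
      _ ≤ normPerm ((gammaP τ m)⁻¹ * P) + normPerm (P⁻¹ * c) := normPerm_mul_le _ _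
      _ ≤ (k - m) + normPerm (P⁻¹ * c) := by rw [hsplit]; omega
  have htri2 : normPerm c ≤ m + normPerm ((gammaP τ m)⁻¹ * c) := by
    have hform : (gammaP τ m) * ((gammaP τ m)⁻¹ * c) = c := by rw [mul_inv_cancel_left]
    calc normPerm c = normPerm ((gammaP τ m) * ((gammaP τ m)⁻¹ * c)) := by rw [hform]
      _ ≤ normPerm (gammaP τ m) + normPerm ((gammaP τ m)⁻¹ * c) := normPerm_mul_le _ _
      _ ≤ m + normPerm ((gammaP τ m)⁻¹ * c) := by
          rw [chain_norm_eq hswap hk hm]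
  unfold precLe
  rw [chain_norm_eq hswap hk hm, hnormc]
  omega

end Chain

section Witness

variable {k : ℕ} {i j : Fin k → Fin n}

lemma chain_support (i j : Fin k → Fin n) (hij : ∀ l, i l ≠ j l) :
    ∀ (m : ℕ), m ≤ k →
      (∀ (m' : Fin k), (m' : ℕ) < m →
        ¬ (gammaP (fun l => Equiv.swap (i l) (j l)) (m' : ℕ)).SameCycle (i m') (j m')) →
      ∀ x, gammaP (fun l => Equiv.swap (i l) (j l)) m x ≠ x →
        ∃ m' : Fin k, (m' : ℕ) < m ∧
          (gammaP (fun l => Equiv.swap (i l) (j l)) m).SameCycle x (i m') := by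
  set τ := fun l => Equiv.swap (i l) (j l) with hτ
  intro m
  induction m with
  | zero =>
    intro _ _ x hx
    rw [gammaP_zero] at hx
    exact absurd rfl hx
  | succ m ih =>
    intro hm hmrg x hx
    have hlt : m < k := by omega
    set mf : Fin k := ⟨m, hlt⟩ with hmf
    have hstep : gammaP τ (m + 1) = gammaP τ m * Equiv.swap (i mf) (j mf) :=
      gammaP_succ τ hlt
    have hnsc : ¬ (gammaP τ m).SameCycle (i mf) (j mf) := by
      have := hmrg mf (by simp [hmf])
      simpa [hmf] using this
    have hsub : ∀ {u v : Fin n}, (gammaP τ m).SameCycle u v →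
        (gammaP τ (m + 1)).SameCycle u v := by
      intro u v huv
      rw [hstep]
      exact sc_subset_merge (hij mf) hnsc huv
    have hlink : (gammaP τ (m + 1)).SameCycle (i mf) (j mf) := by
      rw [hstep]
      exact merge_link (hij mf) hnsc
    by_cases hxa : (gammaP τ m).SameCycle x (i mf)
    · exact ⟨mf, Nat.lt_succ_self m, hsub hxa⟩
    by_cases hxb : (gammaP τ m).SameCycle x (j mf)
    · exact ⟨mf, Nat.lt_succ_self m, (hsub hxb).trans hlink.symm⟩
    · have hxia : x ≠ i mf := fun h => hxa (h ▸ Equiv.Perm.SameCycle.refl _ x)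
      have hxib : x ≠ j mf := fun h => hxb (h ▸ Equiv.Perm.SameCycle.refl _ x)
      have hxm : gammaP τ m x ≠ x := by
        intro hcon
        apply hx
        rw [hstep, mul_swap_apply_other _ hxia hxib, hcon]
      obtain ⟨m', hm', hscm⟩ := ih (by omega)
        (fun m'' hm'' => hmrg m'' (by omega)) x hxm
      exact ⟨m', by omega, hsub hscm⟩

end Witness

end Stmt12Aux

theorem stmt12 (n k : ℕ) (i j : Fin k → Fin n) (hij : ∀ l, i l < j l)
    (hmono : Monotone i)
    (hγ : (fun l => Equiv.swap (i l) (j l)) ∈ SigmaSet n k) (l : Fin k) :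
    gammaP (fun m => Equiv.swap (i m) (j m)) ((l : ℕ) + 1) (i l) = j l ∧
    gammaP (fun m => Equiv.swap (i m) (j m)) ((l : ℕ) + 1) (j l) =
      gammaP (fun m => Equiv.swap (i m) (j m)) (l : ℕ) (i l) ∧
    ∀ x, x ≠ i l → x ≠ j l →
      gammaP (fun m => Equiv.swap (i m) (j m)) ((l : ℕ) + 1) x =
        gammaP (fun m => Equiv.swap (i m) (j m)) (l : ℕ) x := by
  classical
  open Stmt12Aux in
  set τ := fun m => Equiv.swap (i m) (j m) with hτ
  obtain ⟨hswap, hk', hpre⟩ := hγ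
  have hijne : ∀ m, i m ≠ j m := fun m => (hij m).ne
  have hn : 2 ≤ n := by
    have h1 : (i l).val < (j l).val := hij l
    have h2 := (j l).isLt
    omega
  have hll : (l : ℕ) < k := l.isLt
  have hk : normPerm (gammaP τ k) = k := by
    rw [gammaP_stall τ le_rfl]
    exact hk'
  have hstep : gammaP τ ((l : ℕ) + 1) = gammaP τ (l : ℕ) * Equiv.swap (i l) (j l) := by
    have h := gammaP_succ τ hll
    have : τ ⟨(l : ℕ), hll⟩ = Equiv.swap (i l) (j l) := by rw [hτ]
    rwa [this] at h
  refine ⟨?_, ?_, ?_⟩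
  case _ => -- second goal handled below; we produce goals in order
    -- goal 1 : gammaP τ (l+1) (i l) = j l
    rw [hstep, mul_swap_apply_left]
    -- suffices: gammaP τ l (j l) = j l
    by_contra hmoved
    set ρ := gammaP τ (l : ℕ) with hρ
    -- norms
    have hnρ : normPerm ρ = (l : ℕ) := chain_norm_eq hswap hk (le_of_lt hll)
    have hnσ : normPerm (gammaP τ ((l : ℕ) + 1)) = (l : ℕ) + 1 :=
      chain_norm_eq hswap hk (by omega)
    -- each step is a merge
    have hmrg_all : ∀ (m : Fin k), ¬ (gammaP τ (m : ℕ)).SameCycle (i m) (j m) := by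
      intro m hsc
      have h1 : normPerm (gammaP τ (m : ℕ)) = (m : ℕ) :=
        chain_norm_eq hswap hk (le_of_lt m.isLt)
      have h2 : normPerm (gammaP τ ((m : ℕ) + 1)) = (m : ℕ) + 1 :=
        chain_norm_eq hswap hk m.isLt
      have hstepm : gammaP τ ((m : ℕ) + 1) =
          gammaP τ (m : ℕ) * Equiv.swap (i m) (j m) := by
        have h := gammaP_succ τ m.isLt
        have heq : τ ⟨(m : ℕ), m.isLt⟩ = Equiv.swap (i m) (j m) := by rw [hτ]
        rwa [heq] at h
      obtain ⟨h3, _⟩ := normPerm_split hsc (hijne m)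
      rw [← hstepm] at h3
      omega
    have hnsc : ¬ ρ.SameCycle (i l) (j l) := hmrg_all l
    -- witness in the cycle of (j l)
    obtain ⟨m', hm', hscjz⟩ := chain_support i j hijne (l : ℕ) (le_of_lt hll)
      (fun m'' _ => hmrg_all m'') (j l) hmoved
    set z := i m' with hz
    have hscjz' : ρ.SameCycle (j l) z := hscjz
    have hm'le : m' ≤ l := by
      rw [Fin.le_def]
      omega
    have hzle : z ≤ i l := hmono hm'le
    have hzne : z ≠ i l := by
      intro h
      apply hnsc
      have h2 : ρ.SameCycle (j l) (i l) := by rw [← h]; exact hscjz'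
      exact h2.symm
    have hzlt : z.val < (i l).val := Fin.lt_def.mp (lt_of_le_of_ne hzle hzne)
    -- increasing cycles
    have hIρ : IncP ρ :=
      incP_of_precLe hn (chain_prec hswap hk hpre hn (le_of_lt hll))
    have hIσ : IncP (gammaP τ ((l : ℕ) + 1)) :=
      incP_of_precLe hn (chain_prec hswap hk hpre hn (show (l : ℕ) + 1 ≤ k by omega))
    have hlink : (gammaP τ ((l : ℕ) + 1)).SameCycle (i l) (j l) := by
      rw [hstep]
      exact merge_link (hijne l) hnsc
    have hσil : (gammaP τ ((l : ℕ) + 1)) (i l) = ρ (j l) := by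
      rw [hstep, mul_swap_apply_left]
    have hρj_ne_il : ρ (j l) ≠ i l := by
      intro h
      apply hnsc
      have : ρ.SameCycle (j l) (ρ (j l)) := (Equiv.Perm.SameCycle.refl ρ (j l)).apply_right
      rw [h] at this
      exact this.symm
    -- step 1 : i l < ρ (j l) < j l
    have hst1 := hIσ (i l) (j l) hlink (hijne l).symm
      (by rw [hσil]; exact fun h => hmoved h.symm)
    rw [hσil] at hst1
    have hijval : (i l).val < (j l).val := hij l
    have hρjv1 : (i l).val < (ρ (j l)).val ∧ (ρ (j l)).val < (j l).val := by
      have hne1 : (ρ (j l)).val ≠ (j l).val := fun h => hmoved (Fin.val_injective h)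
      have hne2 : (ρ (j l)).val ≠ (i l).val := fun h => hρj_ne_il (Fin.val_injective h)
      simp only [Stmt12Aux.Btw, not_or, not_and, not_lt] at hst1
      omega
    -- step 2 : contradiction with the cycle of j l in ρ
    have hst2 := hIρ (j l) z hscjz'
      (by intro h; rw [h] at hzlt; exact absurd hijval (by omega))
      (by intro h; rw [h] at hzlt; exact absurd hρjv1.1 (by omega))
    apply hst2
    simp only [Stmt12Aux.Btw]
    omega
  case _ =>
    rw [hstep, mul_swap_apply_right]
  case _ =>
    intro x hx1 hx2
    rw [hstep, mul_swap_apply_other _ hx1 hx2]
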